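/- (Dilworth) In a finite poset P, the maximum size of an antichain equals the minimum number of chains needed to cover P. -/

import Mathlib

open Finset

section DilworthAux

variable {α : Type*} [PartialOrder α] [DecidableEq α]

open Classical in
/-- Maximal cardinality of an antichain contained in `s`. -/
noncomputable def maxAC (s : Finset α) : ℕ :=
  (s.powerset.filter fun A : Finset α => IsAntichain (· ≤ ·) ((A : Set α))).sup Finset.card

lemma le_maxAC {s A : Finset α} (hA : A ⊆ s) (h : IsAntichain (· ≤ ·) (A : Set α)) :
    A.card ≤ maxAC s := by
  apply Finset.le_sup (f := Finset.card)
  simp only [Finset.mem_filter, Finset.mem_powerset]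
  exact ⟨hA, h⟩

lemma exists_maxAC (s : Finset α) :
    ∃ A : Finset α, A ⊆ s ∧ IsAntichain (· ≤ ·) (A : Set α) ∧ A.card = maxAC s := by
  classical
  have hne : ((s.powerset.filter fun A : Finset α =>
      IsAntichain (· ≤ ·) ((A : Set α)))).Nonempty := by
    refine ⟨∅, Finset.mem_filter.2 ⟨Finset.mem_powerset.2 (Finset.empty_subset s), ?_⟩⟩
    rw [Finset.coe_empty]
    exact Set.subsingleton_empty.isAntichain _
  obtain ⟨A, hA, hEq⟩ := Finset.exists_mem_eq_sup _ hne Finset.card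
  rw [Finset.mem_filter, Finset.mem_powerset] at hA
  exact ⟨A, hA.1, hA.2, hEq.symm⟩

lemma maxAC_mono {s t : Finset α} (h : s ⊆ t) : maxAC s ≤ maxAC t := by
  obtain ⟨A, hAs, hA, hc⟩ := exists_maxAC s
  rw [← hc]
  exact le_maxAC (hAs.trans h) hA

lemma dilworth_core :
    ∀ n : ℕ, ∀ s : Finset α, s.card ≤ n →
    ∃ C : Finset (Finset α),
      (∀ c ∈ C, IsChain (· ≤ ·) (c : Set α) ∧ c ⊆ s) ∧
      (∀ c₁ ∈ C, ∀ c₂ ∈ C, c₁ ≠ c₂ → Disjoint c₁ c₂) ∧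
      (∀ x ∈ s, ∃ c ∈ C, x ∈ c) ∧ C.card ≤ maxAC s := by
  classical
  intro n
  induction n with
  | zero =>
    intro s hs
    have : s = ∅ := Finset.card_eq_zero.1 (Nat.le_zero.1 hs)
    subst this
    exact ⟨∅, by simp, by simp, by simp, by simp⟩
  | succ n ih =>
    intro s hs
    rcases s.eq_empty_or_nonempty with rfl | hsne
    · exact ⟨∅, by simp, by simp, by simp, by simp⟩
    obtain ⟨a, ha, hamax⟩ := s.exists_maximal hsne
    set s' := s.erase a with hs'def
    have hanotin : a ∉ s' := Finset.notMem_erase a s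
    have hs'sub : s' ⊆ s := Finset.erase_subset a s
    haveI : Nonempty α := ⟨a⟩
    have hs'card : s'.card ≤ n := by
      have h1 : s'.card = s.card - 1 := Finset.card_erase_of_mem ha
      omega
    obtain ⟨C', hC'chain, hC'disj, hC'cov, hC'card⟩ := ih s' hs'card
    set k := maxAC s' with hkdef
    have hmono : k ≤ maxAC s := maxAC_mono hs'sub
    by_cases hk : k + 1 ≤ maxAC s
    · -- easy case: just add the singleton chain {a}
      refine ⟨insert {a} C', ?_, ?_, ?_, ?_⟩
      · intro c hc
        rcases Finset.mem_insert.1 hc with rfl | hc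
        · constructor
          · simpa using Set.Subsingleton.isChain (Set.subsingleton_singleton)
          · simpa using ha
        · exact ⟨(hC'chain c hc).1, (hC'chain c hc).2.trans hs'sub⟩
      · intro c₁ h₁ c₂ h₂ hne
        rcases Finset.mem_insert.1 h₁ with rfl | h₁ <;>
          rcases Finset.mem_insert.1 h₂ with rfl | h₂
        · exact absurd rfl hne
        · exact Finset.disjoint_singleton_left.2 fun hac =>
            hanotin ((hC'chain c₂ h₂).2 hac)
        · exact (Finset.disjoint_singleton_left.2 fun hac =>
            hanotin ((hC'chain c₁ h₁).2 hac)).symm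
        · exact hC'disj c₁ h₁ c₂ h₂ hne
      · intro x hx
        by_cases hxa : x = a
        · exact ⟨{a}, Finset.mem_insert_self _ _, by simp [hxa]⟩
        · obtain ⟨c, hc, hxc⟩ := hC'cov x (Finset.mem_erase.2 ⟨hxa, hx⟩)
          exact ⟨c, Finset.mem_insert_of_mem hc, hxc⟩
      · calc (insert {a} C').card ≤ C'.card + 1 := Finset.card_insert_le _ _
          _ ≤ k + 1 := by omega
          _ ≤ maxAC s := hk
    · -- hard case
      have hks : maxAC s = k := le_antisymm (by omega) hmono
      have hk1 : 1 ≤ k := by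
        have h1 : ({a} : Finset α).card ≤ maxAC s :=
          le_maxAC (by simpa using ha) (by simpa using isAntichain_singleton a _)
        simp at h1; omega
      obtain ⟨A0, hA0s, hA0, hA0card⟩ := exists_maxAC s'
      -- a global choice of covering chain for each element of s'
      choose! g hg1 hg2 using hC'cov
      have hginj : ∀ B : Finset α, B ⊆ s' → IsAntichain (· ≤ ·) (B : Set α) →
          Set.InjOn g (B : Set α) := by
        intro B hBs hB x hx y hy hgxy
        by_contra hne
        have hxc : x ∈ g x := hg2 x (hBs hx)
        have hyc : y ∈ g x := hgxy ▸ hg2 y (hBs hy)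
        have hch := (hC'chain (g x) (hg1 x (hBs hx))).1
        rcases hch (by simpa using hxc) (by simpa using hyc) hne with h | h
        · exact hB hx hy hne h
        · exact hB hy hx (Ne.symm hne) h
      -- every antichain of size k in s' meets every chain of C'
      have meet : ∀ B : Finset α, B ⊆ s' → IsAntichain (· ≤ ·) (B : Set α) → B.card = k →
          ∀ c ∈ C', ∃ b ∈ B, b ∈ c := by
        intro B hBs hB hBcard c hc
        have himsub : B.image g ⊆ C' := fun c' hc' => by
          obtain ⟨b, hb, rfl⟩ := Finset.mem_image.1 hc'
          exact hg1 b (hBs hb)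
        have himcard : (B.image g).card = k := by
          rw [Finset.card_image_of_injOn (hginj B hBs hB), hBcard]
        have : B.image g = C' := Finset.eq_of_subset_of_card_le himsub (by omega)
        have hc' : c ∈ B.image g := this ▸ hc
        obtain ⟨b, hb, rfl⟩ := Finset.mem_image.1 hc'
        exact ⟨b, hb, hg2 b (hBs hb)⟩
      -- eligible elements
      set E : Finset α → Finset α := fun c => s'.filter
        (fun x => x ∈ c ∧ ∃ B : Finset α, B ⊆ s' ∧ IsAntichain (· ≤ ·) (B : Set α) ∧
          B.card = k ∧ x ∈ B) with hEdef
      have hEmem : ∀ c x, x ∈ E c ↔ x ∈ s' ∧ x ∈ c ∧ ∃ B : Finset α, B ⊆ s' ∧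
          IsAntichain (· ≤ ·) (B : Set α) ∧ B.card = k ∧ x ∈ B := by
        intro c x
        simp [hEdef, Finset.mem_filter, and_assoc]
      have hE : ∀ c ∈ C', ∃ t, t ∈ E c ∧ ∀ x ∈ E c, x ≤ t := by
        intro c hc
        obtain ⟨b0, hb0B, hb0c⟩ := meet A0 hA0s hA0 hA0card c hc
        have hEne : (E c).Nonempty :=
          ⟨b0, (hEmem c b0).2 ⟨hA0s hb0B, hb0c, A0, hA0s, hA0, hA0card, hb0B⟩⟩
        obtain ⟨t, htE, htmax⟩ := (E c).exists_maximal hEne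
        refine ⟨t, htE, fun x hx => ?_⟩
        by_cases hxt : x = t
        · exact le_of_eq hxt
        · have hxc : x ∈ c := ((hEmem c x).1 hx).2.1
          have htc : t ∈ c := ((hEmem c t).1 htE).2.1
          rcases (hC'chain c hc).1 (by simpa using hxc) (by simpa using htc) hxt with h | h
          · exact h
          · exact htmax hx h
      choose! t ht hmax using hE
      -- the antichain of top eligible elements
      have htE : ∀ c ∈ C', t c ∈ E c := ht
      have htinj : Set.InjOn t (C' : Set (Finset α)) := by
        intro c₁ h₁ c₂ h₂ he
        by_contra hne
        have h1 : t c₁ ∈ c₁ := ((hEmem c₁ (t c₁)).1 (htE c₁ h₁)).2.1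
        have h2 : t c₁ ∈ c₂ := he ▸ ((hEmem c₂ (t c₂)).1 (htE c₂ h₂)).2.1
        exact Finset.disjoint_left.1 (hC'disj c₁ h₁ c₂ h₂ hne) h1 h2
      set A : Finset α := C'.image t with hAdef
      have hCk : C'.card = k := by
        refine le_antisymm hC'card ?_
        calc k = A0.card := hA0card.symm
          _ = (A0.image g).card := (Finset.card_image_of_injOn (hginj A0 hA0s hA0)).symm
          _ ≤ C'.card := Finset.card_le_card (fun c' hc' => by
              obtain ⟨b, hb, rfl⟩ := Finset.mem_image.1 hc'
              exact hg1 b (hA0s hb))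
      have hAcard : A.card = k := by
        rw [hAdef, Finset.card_image_of_injOn htinj, hCk]
      have hAs' : A ⊆ s' := fun x hx => by
        obtain ⟨c, hc, rfl⟩ := Finset.mem_image.1 hx
        exact ((hEmem c (t c)).1 (htE c hc)).1
      -- incomparability of the top eligible elements
      have hApair : ∀ c₁ ∈ C', ∀ c₂ ∈ C', t c₁ ≠ t c₂ → ¬ t c₁ ≤ t c₂ := by
        intro c₁ h₁ c₂ h₂ hne hle
        obtain ⟨-, -, B, hBs, hB, hBcard, htB⟩ := (hEmem c₂ (t c₂)).1 (htE c₂ h₂)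
        obtain ⟨b, hbB, hbc₁⟩ := meet B hBs hB hBcard c₁ h₁
        have hbE : b ∈ E c₁ := (hEmem c₁ b).2 ⟨hBs hbB, hbc₁, B, hBs, hB, hBcard, hbB⟩
        have hble : b ≤ t c₂ := le_trans (hmax c₁ h₁ b hbE) hle
        have hbeq : b = t c₂ := by
          by_contra hbne
          exact hB hbB htB hbne hble
        have : t c₂ ≤ t c₁ := hbeq ▸ hmax c₁ h₁ b hbE
        exact hne (le_antisymm hle this)
      have hA : IsAntichain (· ≤ ·) (A : Set α) := by
        intro x hx y hy hne hle
        obtain ⟨c₁, h₁, rfl⟩ := Finset.mem_image.1 hx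
        obtain ⟨c₂, h₂, rfl⟩ := Finset.mem_image.1 hy
        exact hApair c₁ h₁ c₂ h₂ hne hle
      -- find a chain whose top eligible element is below a
      have hexc : ∃ c ∈ C', t c ≤ a := by
        by_contra hno
        push_neg at hno
        have hanotA : a ∉ A := fun h => hanotin (hAs' h)
        have hins : IsAntichain (· ≤ ·) ((insert a A : Finset α) : Set α) := by
          intro x hx y hy hne hle
          simp only [Finset.coe_insert, Set.mem_insert_iff, Finset.mem_coe] at hx hy
          rcases hx with rfl | hx <;> rcases hy with rfl | hy
          · exact hne rfl
          · obtain ⟨c, hc, rfl⟩ := Finset.mem_image.1 hy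
            have : t c ∈ s := hs'sub (hAs' (Finset.mem_image_of_mem t hc))
            exact hne (le_antisymm hle (hamax this hle))
          · obtain ⟨c, hc, rfl⟩ := Finset.mem_image.1 hx
            exact hno c hc hle
          · exact hA hx hy hne hle
        have : (insert a A).card ≤ maxAC s := by
          refine le_maxAC ?_ hins
          intro x hx
          rcases Finset.mem_insert.1 hx with rfl | hx
          · exact ha
          · exact hs'sub (hAs' hx)
        rw [Finset.card_insert_of_notMem hanotA, hAcard, hks] at this
        omega
      obtain ⟨c₀, hc₀, hc₀le⟩ := hexc
      set b := t c₀ with hbdef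
      set d : Finset α := c₀.filter (fun x => x ≤ b) with hddef
      have hdc₀ : d ⊆ c₀ := Finset.filter_subset _ _
      have hds' : d ⊆ s' := hdc₀.trans (hC'chain c₀ hc₀).2
      have hbd : b ∈ d := Finset.mem_filter.2 ⟨((hEmem c₀ b).1 (htE c₀ hc₀)).2.1, le_refl b⟩
      set s'' : Finset α := s' \ d with hs''def
      have hs''sub : s'' ⊆ s' := Finset.sdiff_subset
      have hs''card : s''.card ≤ n := le_trans (Finset.card_le_card hs''sub) hs'card
      have hs''max : maxAC s'' ≤ k - 1 := by
        obtain ⟨A1, hA1s, hA1, hA1card⟩ := exists_maxAC s''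
        rw [← hA1card]
        have hA1s' : A1 ⊆ s' := hA1s.trans hs''sub
        have hle : A1.card ≤ k := by
          rw [hA1card, hkdef]; exact maxAC_mono hs''sub
        have hne : A1.card ≠ k := by
          intro hcard
          obtain ⟨x, hxA1, hxc₀⟩ := meet A1 hA1s' hA1 hcard c₀ hc₀
          have hxE : x ∈ E c₀ :=
            (hEmem c₀ x).2 ⟨hA1s' hxA1, hxc₀, A1, hA1s', hA1, hcard, hxA1⟩
          have hxd : x ∈ d := Finset.mem_filter.2 ⟨hxc₀, hmax c₀ hc₀ x hxE⟩
          exact (Finset.mem_sdiff.1 (hA1s hxA1)).2 hxd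
        omega
      obtain ⟨C'', hC''chain, hC''disj, hC''cov, hC''card⟩ := ih s'' hs''card
      set e : Finset α := insert a d with hedef
      have hanotd : a ∉ d := fun h => hanotin (hds' h)
      have hechain : IsChain (· ≤ ·) (e : Set α) := by
        intro x hx y hy hne
        simp only [hedef, Finset.coe_insert, Set.mem_insert_iff, Finset.mem_coe] at hx hy
        rcases hx with rfl | hx <;> rcases hy with rfl | hy
        · exact absurd rfl hne
        · exact Or.inr (le_trans (Finset.mem_filter.1 hy).2 hc₀le)
        · exact Or.inl (le_trans (Finset.mem_filter.1 hx).2 hc₀le)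
        · exact (hC'chain c₀ hc₀).1 (by simpa using hdc₀ hx) (by simpa using hdc₀ hy) hne
      have hes : e ⊆ s := by
        intro x hx
        rcases Finset.mem_insert.1 hx with rfl | hx
        · exact ha
        · exact hs'sub (hds' hx)
      have hedisj : ∀ c ∈ C'', Disjoint e c := by
        intro c hc
        rw [Finset.disjoint_left]
        intro x hxe hxc
        have hxs'' : x ∈ s'' := (hC''chain c hc).2 hxc
        rcases Finset.mem_insert.1 hxe with rfl | hxd
        · exact hanotin (hs''sub hxs'')
        · exact (Finset.mem_sdiff.1 hxs'').2 hxd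
      refine ⟨insert e C'', ?_, ?_, ?_, ?_⟩
      · intro c hc
        rcases Finset.mem_insert.1 hc with rfl | hc
        · exact ⟨hechain, hes⟩
        · exact ⟨(hC''chain c hc).1, (hC''chain c hc).2.trans (hs''sub.trans hs'sub)⟩
      · intro c₁ h₁ c₂ h₂ hne
        rcases Finset.mem_insert.1 h₁ with rfl | h₁ <;>
          rcases Finset.mem_insert.1 h₂ with rfl | h₂
        · exact absurd rfl hne
        · exact hedisj c₂ h₂
        · exact (hedisj c₁ h₁).symm
        · exact hC''disj c₁ h₁ c₂ h₂ hne
      · intro x hx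
        by_cases hxa : x = a
        · exact ⟨e, Finset.mem_insert_self _ _, by simp [hedef, hxa]⟩
        · have hxs' : x ∈ s' := Finset.mem_erase.2 ⟨hxa, hx⟩
          by_cases hxd : x ∈ d
          · exact ⟨e, Finset.mem_insert_self _ _, Finset.mem_insert_of_mem hxd⟩
          · obtain ⟨c, hc, hxc⟩ := hC''cov x (Finset.mem_sdiff.2 ⟨hxs', hxd⟩)
            exact ⟨c, Finset.mem_insert_of_mem hc, hxc⟩
      · calc (insert e C'').card ≤ C''.card + 1 := Finset.card_insert_le _ _
          _ ≤ (k - 1) + 1 := by omega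
          _ = k := by omega
          _ = maxAC s := hks.symm

end DilworthAux

/-- Dilworth's theorem: in a finite poset, the maximum size of an antichain equals the
minimum number of chains needed to cover the poset. -/
theorem dilworth (α : Type*) [PartialOrder α] [Fintype α] [DecidableEq α] :
    sSup {k : ℕ | ∃ A : Finset α, IsAntichain (· ≤ ·) (A : Set α) ∧ A.card = k} =
    sInf {k : ℕ | ∃ C : Finset (Finset α),
      (∀ c ∈ C, IsChain (· ≤ ·) (c : Set α)) ∧ (∀ x : α, ∃ c ∈ C, x ∈ c) ∧ C.card = k} := by
  classical
  set S1 := {k : ℕ | ∃ A : Finset α, IsAntichain (· ≤ ·) (A : Set α) ∧ A.card = k} with hS1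
  set S2 := {k : ℕ | ∃ C : Finset (Finset α),
      (∀ c ∈ C, IsChain (· ≤ ·) (c : Set α)) ∧ (∀ x : α, ∃ c ∈ C, x ∈ c) ∧ C.card = k} with hS2
  obtain ⟨C, hCchain, _, hCcov, hCcard⟩ :=
    dilworth_core (Fintype.card α) (Finset.univ : Finset α) (le_of_eq (Finset.card_univ))
  have hC2 : C.card ∈ S2 :=
    ⟨C, fun c hc => (hCchain c hc).1, fun x => hCcov x (Finset.mem_univ x), rfl⟩
  have hS2ne : S2.Nonempty := ⟨C.card, hC2⟩
  have hemptyAC : IsAntichain (· ≤ ·) (((∅ : Finset α) : Set α)) := by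
    rw [Finset.coe_empty]
    exact Set.subsingleton_empty.isAntichain _
  have hS1ne : S1.Nonempty := ⟨0, ∅, hemptyAC, rfl⟩
  have hS1bdd : BddAbove S1 := by
    refine ⟨Fintype.card α, fun k hk => ?_⟩
    obtain ⟨A, _, rfl⟩ := hk
    exact Finset.card_le_univ A
  -- easy direction: every antichain-size is at most every cover-size
  have heasy : ∀ k₁ ∈ S1, ∀ k₂ ∈ S2, k₁ ≤ k₂ := by
    intro k₁ hk₁ k₂ hk₂
    obtain ⟨A, hA, rfl⟩ := hk₁
    obtain ⟨D, hDchain, hDcov, rfl⟩ := hk₂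
    choose! g hg1 hg2 using fun x => hDcov x
    refine Finset.card_le_card_of_injOn g (fun x _ => hg1 x) ?_
    intro x hx y hy hgxy
    by_contra hne
    have hxy : x ∈ g x := hg2 x
    have hyy : y ∈ g x := hgxy ▸ hg2 y
    rcases hDchain (g x) (hg1 x) (by simpa using hxy) (by simpa using hyy) hne with h | h
    · exact hA hx hy hne h
    · exact hA hy hx (Ne.symm hne) h
  have h1 : sSup S1 ≤ sInf S2 :=
    csSup_le hS1ne fun k₁ hk₁ => le_csInf hS2ne fun k₂ hk₂ => heasy k₁ hk₁ k₂ hk₂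
  have h2 : sInf S2 ≤ sSup S1 := by
    have hmem : maxAC (Finset.univ : Finset α) ∈ S1 := by
      obtain ⟨A, _, hA, hAcard⟩ := exists_maxAC (Finset.univ : Finset α)
      exact ⟨A, hA, hAcard⟩
    calc sInf S2 ≤ C.card := csInf_le (OrderBot.bddBelow S2) hC2
      _ ≤ maxAC (Finset.univ : Finset α) := hCcard
      _ ≤ sSup S1 := le_csSup hS1bdd hmem
  exact le_antisymm h1 h2
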